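/- In a cyclic group C_j of order j with subgroup C_i of order i (i | j), the number of elements of order k in each generating coset of C_j/C_i is φ(k)/φ(j/i), provided lcm(i,k) = j. -/

import Mathlib

open Finset

private lemma lift_coprime (j d : ℕ) [NeZero j] (hd : d ∣ j) (t : ℕ) (ht : t.Coprime d) :
    ∃ u u' : ℕ, u.Coprime j ∧ u'.Coprime j ∧ u ≡ t [MOD d] ∧ u * u' ≡ 1 [MOD j] := by
  obtain ⟨U, hU⟩ := ZMod.unitsMap_surjective hd (ZMod.unitOfCoprime t ht)
  refine ⟨(U : ZMod j).val, ((U⁻¹ : (ZMod j)ˣ) : ZMod j).val,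
    ZMod.val_coe_unit_coprime U, ZMod.val_coe_unit_coprime U⁻¹, ?_, ?_⟩
  · rw [← ZMod.natCast_eq_natCast_iff]
    have h5 : ((U : ZMod j).val : ZMod d) = ZMod.castHom hd (ZMod d) (U : ZMod j) := by
      rw [ZMod.natCast_val]; rfl
    rw [h5]
    have := congrArg (Units.val) hU
    simpa [ZMod.unitsMap] using this
  · rw [← ZMod.natCast_eq_natCast_iff]
    push_cast [ZMod.natCast_val, ZMod.cast_id]
    exact_mod_cast U.mul_inv

theorem stmt10 {Cj : Type*} [CommGroup Cj] [Finite Cj] [IsCyclic Cj]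
    (j i k : ℕ) (hj : Nat.card Cj = j) (Ci : Subgroup Cj) (hi : Nat.card Ci = i)
    (hij : i ∣ j) (hk : Nat.lcm i k = j)
    (x : Cj) (hgen : Subgroup.zpowers (QuotientGroup.mk x : Cj ⧸ Ci) = ⊤) :
    (Nat.card {h : Cj //
        (QuotientGroup.mk h : Cj ⧸ Ci) = QuotientGroup.mk x ∧ orderOf h = k} : ℚ) =
      (Nat.totient k : ℚ) / (Nat.totient (j / i) : ℚ) := by
  classical
  have : Fintype Cj := Fintype.ofFinite Cj
  set Q := Cj ⧸ Ci
  have hj0 : 0 < j := hj ▸ Nat.card_pos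
  have hi0 : 0 < i := hi ▸ Nat.card_pos
  haveI : NeZero j := ⟨hj0.ne'⟩
  set d := Nat.card Q with hd
  have hdj : j = d * i := by
    rw [← hj, ← hi]; exact Subgroup.card_eq_card_quotient_mul_card_subgroup Ci
  have hd0 : 0 < d := Nat.card_pos
  have hdi : j / i = d := by rw [hdj]; exact Nat.mul_div_cancel _ hi0
  have hkj : k ∣ j := hk ▸ Nat.dvd_lcm_right i k
  have hddj : d ∣ j := ⟨i, hdj⟩
  have hxall : ∀ q : Q, q ∈ Subgroup.zpowers (QuotientGroup.mk x : Q) := by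
    intro q; rw [hgen]; trivial
  have hox : orderOf (QuotientGroup.mk x : Q) = d :=
    orderOf_eq_card_of_forall_mem_zpowers hxall
  haveI : IsCyclic Q := ⟨⟨QuotientGroup.mk x, hxall⟩⟩
  -- Lemma A: every element of order k maps to a generator of Q
  have lemA : ∀ h : Cj, orderOf h = k → orderOf (QuotientGroup.mk h : Q) = d := by
    intro h hh
    set m := orderOf (QuotientGroup.mk h : Q) with hm
    have hmd : m ∣ d := orderOf_dvd_natCard _
    have hmem : h ^ m ∈ Ci := by
      rw [← QuotientGroup.eq_one_iff, QuotientGroup.mk_pow]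
      exact pow_orderOf_eq_one _
    have h1 : orderOf (h ^ m) ∣ i := by
      rw [← hi, ← Subgroup.orderOf_mk (h ^ m) hmem]
      exact orderOf_dvd_natCard _
    rw [orderOf_pow, hh] at h1
    have hg : Nat.gcd k m ∣ k := Nat.gcd_dvd_left k m
    have h2 : k ∣ i * Nat.gcd k m := by
      have := Nat.mul_dvd_mul_right h1 (Nat.gcd k m)
      rwa [Nat.div_mul_cancel hg] at this
    have h3 : j ∣ i * m := by
      rw [← hk]
      exact Nat.lcm_dvd (Dvd.intro m rfl)
        (h2.trans (mul_dvd_mul_left i (Nat.gcd_dvd_right k m)))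
    have h4 : d ∣ m := by
      have : i * d ∣ i * m := by rw [mul_comm i d, ← hdj]; exact h3
      exact (mul_dvd_mul_iff_left hi0.ne').mp this
    exact Nat.dvd_antisymm hmd h4
  -- fibers
  set F : Q → Finset Cj := fun q =>
    univ.filter (fun h => (QuotientGroup.mk h : Q) = q ∧ orderOf h = k) with hF
  -- Lemma B: all generator-fibers have the same cardinality
  have lemB : ∀ q : Q, orderOf q = d →
      (F q).card = (F (QuotientGroup.mk x)).card := by
    intro q hq
    obtain ⟨t, ht⟩ := mem_powers_iff_mem_zpowers.mpr (hxall q)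
    have htd : t.Coprime d := by
      rw [← ht, orderOf_pow, hox] at hq
      have hgd : Nat.gcd d t = 1 := by
        rcases (Nat.div_eq_self).mp hq with h | h
        · omega
        · exact h
      exact Nat.coprime_comm.mp hgd
    obtain ⟨u, u', hucop, hu'cop, hut, huu'⟩ := lift_coprime j d hddj t htd
    have hordk : ∀ h : Cj, orderOf h ∣ j := fun h => hj ▸ orderOf_dvd_natCard h
    have key : ∀ (v : ℕ), v.Coprime j → ∀ h : Cj, orderOf h = k → orderOf (h ^ v) = k := by
      intro v hv h hh
      rw [← hh]
      exact Nat.Coprime.orderOf_pow (Nat.Coprime.coprime_dvd_left (hh ▸ hkj) hv.symm)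
    have hpowinv : ∀ h : Cj, (h ^ u) ^ u' = h := by
      intro h
      rw [← pow_mul]
      have hmod : u * u' ≡ 1 [MOD orderOf h] := huu'.of_dvd (hordk h)
      calc h ^ (u * u') = h ^ 1 := pow_eq_pow_iff_modEq.mpr hmod
      _ = h := pow_one h
    have hpowinv' : ∀ h : Cj, (h ^ u') ^ u = h := by
      intro h
      rw [← pow_mul, mul_comm, pow_mul]
      exact hpowinv h
    apply Finset.card_bij' (fun h _ => h ^ u') (fun h _ => h ^ u)
    case left_inv => intro h _; exact hpowinv' h
    case right_inv => intro h _; exact hpowinv h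
    · intro h hh
      simp only [hF, mem_filter, mem_univ, true_and] at hh ⊢
      obtain ⟨hh1, hh2⟩ := hh
      refine ⟨?_, key u' hu'cop h hh2⟩
      rw [QuotientGroup.mk_pow, hh1, ← ht, ← pow_mul]
      have hmod : t * u' ≡ 1 [MOD d] := by
        calc t * u' ≡ u * u' [MOD d] := hut.symm.mul_right u'
        _ ≡ 1 [MOD d] := huu'.of_dvd hddj
      calc (QuotientGroup.mk x : Q) ^ (t * u')
          = (QuotientGroup.mk x : Q) ^ 1 := pow_eq_pow_iff_modEq.mpr (by rwa [hox])
      _ = _ := pow_one _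
    · intro h hh
      simp only [hF, mem_filter, mem_univ, true_and] at hh ⊢
      obtain ⟨hh1, hh2⟩ := hh
      refine ⟨?_, key u hucop h hh2⟩
      rw [QuotientGroup.mk_pow, hh1, ← ht]
      exact pow_eq_pow_iff_modEq.mpr (by rwa [hox])
  -- counting
  haveI : Fintype Q := Fintype.ofFinite Q
  have hcardQ : Fintype.card Q = d := by rw [hd, Nat.card_eq_fintype_card]
  have hcardCj : Fintype.card Cj = j := by rw [← hj, Nat.card_eq_fintype_card]
  have hsum : (univ.filter fun h : Cj => orderOf h = k).card
      = ∑ q ∈ univ.filter (fun q : Q => orderOf q = d), (F q).card := by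
    rw [Finset.card_eq_sum_card_fiberwise
      (f := fun h : Cj => (QuotientGroup.mk h : Q))
      (t := univ.filter (fun q : Q => orderOf q = d))
      (fun h hh => by
        simp only [mem_coe, mem_filter, mem_univ, true_and] at hh ⊢
        exact lemA h hh)]
    refine Finset.sum_congr rfl fun q hq => ?_
    congr 1
    ext h
    simp [hF, and_comm]
  have hsum2 : ∑ q ∈ univ.filter (fun q : Q => orderOf q = d), (F q).card
      = (Nat.totient d) * (F (QuotientGroup.mk x)).card := by
    rw [Finset.sum_congr rfl (fun q hq => lemB q (by simpa using hq)), Finset.sum_const,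
      smul_eq_mul]
    congr 1
    have := IsCyclic.card_orderOf_eq_totient (α := Q) (d := d) (by rw [hcardQ])
    simpa using this
  have hordcount : (univ.filter fun h : Cj => orderOf h = k).card = Nat.totient k := by
    have := IsCyclic.card_orderOf_eq_totient (α := Cj) (d := k) (by rw [hcardCj]; exact hkj)
    simpa using this
  have hmain : Nat.totient k = Nat.totient d * (F (QuotientGroup.mk x)).card := by
    rw [← hordcount, hsum, hsum2]
  have hcardsub : Nat.card {h : Cj //
      (QuotientGroup.mk h : Cj ⧸ Ci) = QuotientGroup.mk x ∧ orderOf h = k}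
      = (F (QuotientGroup.mk x)).card := by
    rw [Nat.card_eq_fintype_card, hF]
    exact Fintype.card_subtype _
  rw [hcardsub, hdi]
  have htd0 : (Nat.totient d : ℚ) ≠ 0 := by
    exact_mod_cast (Nat.totient_pos.mpr hd0).ne'
  field_simp
  exact_mod_cast (mul_comm (Nat.totient d) _ ▸ hmain).symm
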